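/- 𝔎_{r,s} equals the F-span of those e_I with e_I ∈ 𝔊_{r,s} and e_I² = −1, and 𝔓_{r,s} equals the F-span of those e_I with e_I ∈ 𝔊_{r,s} and e_I² = +1. -/

import Mathlib

/-
Setting (Eberlein, "Isometries of Clifford Algebras II"):
`F` a field with `char F ≠ 2`, `n = r + s > 0`, and `Cl(r,s)` the Clifford algebra of `F^n`
in which `eᵢ·eⱼ = -eⱼ·eᵢ` for `i ≠ j`, `eᵢ² = -1` for the first `r` indices and
`eᵢ² = +1` for the last `s` indices.
-/

open CliffordAlgebra

namespace CliffPaper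

/-- The quadratic form `q(x) = -x₁² - … - x_r² + x_{r+1}² + … + x_n²` on `F^(r+s)`. -/
noncomputable def Qf (F : Type*) [Field F] (r s : ℕ) : QuadraticForm F (Fin (r + s) → F) :=
  QuadraticMap.weightedSumSquares F (fun i : Fin (r + s) => if (i : ℕ) < r then (-1 : F) else 1)

/-- The Clifford algebra `Cl(r,s)`. -/
abbrev Cl (F : Type*) [Field F] (r s : ℕ) : Type _ := CliffordAlgebra (Qf F r s)

/-- The generator `e_i` of `Cl(r,s)` (`i` is a zero-based index, so `e_i² = -1` for `i < r`
and `e_i² = +1` for `r ≤ i`). -/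
noncomputable def gen (F : Type*) [Field F] (r s : ℕ) (i : Fin (r + s)) : Cl F r s :=
  ι (Qf F r s) (Pi.single i 1)

/-- For a multi-index `I = {i₁ < … < i_k}`, the product `e_I = e_{i₁} ⋯ e_{i_k}`. -/
noncomputable def eProd (F : Type*) [Field F] (r s : ℕ) (I : Finset (Fin (r + s))) : Cl F r s :=
  ((I.sort (· ≤ ·)).map (gen F r s)).prod

/-- Clifford conjugation: the unique anti-automorphism `c` of `Cl(r,s)` with `c ∘ c = id` and
`c(v) = -v` for all `v ∈ F^n`; concretely, reversal composed with the grade involution. -/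
noncomputable def conj (F : Type*) [Field F] (r s : ℕ) : Cl F r s →ₗ[F] Cl F r s :=
  (reverse (Q := Qf F r s)).comp (involute (Q := Qf F r s)).toLinearMap

theorem conj_mul (F : Type*) [Field F] (r s : ℕ) (a b : Cl F r s) :
    conj F r s (a * b) = conj F r s b * conj F r s a := by
  simp [conj, reverse.map_mul]

/-- `𝔊_{r,s} = {x ∈ Cl(r,s) : c(x) = -x}`, the `-1`-eigenspace of Clifford conjugation,
as an `F`-subspace of `Cl(r,s)`. -/
noncomputable def Gsub (F : Type*) [Field F] (r s : ℕ) : Submodule F (Cl F r s) :=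
  LinearMap.ker (conj F r s + LinearMap.id)

theorem mem_Gsub {F : Type*} [Field F] {r s : ℕ} (x : Cl F r s) :
    x ∈ Gsub F r s ↔ conj F r s x = -x := by
  simp [Gsub, LinearMap.mem_ker, add_eq_zero_iff_eq_neg]

attribute [local instance] LieRing.ofAssociativeRing

/-- `𝔊_{r,s}` as a Lie subalgebra of `Cl(r,s)` with the commutator bracket
`⁅x,y⁆ = x*y - y*x`. -/
noncomputable def GLie (F : Type*) [Field F] (r s : ℕ) : LieSubalgebra F (Cl F r s) where
  toSubmodule := Gsub F r s
  lie_mem' := by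
    intro x y hx hy
    have hx' : x ∈ Gsub F r s := hx
    have hy' : y ∈ Gsub F r s := hy
    show ⁅x, y⁆ ∈ Gsub F r s
    rw [mem_Gsub] at hx' hy' ⊢
    rw [Ring.lie_def, map_sub, conj_mul, conj_mul, hx', hy']
    noncomm_ring

/-- `𝔎_{r,s}`: the `+1`-eigenspace of `β` restricted to `𝔊_{r,s}`. -/
noncomputable def Ksub (F : Type*) [Field F] (r s : ℕ) (β : Cl F r s ≃ₐ[F] Cl F r s) :
    Submodule F (Cl F r s) :=
  LinearMap.ker (β.toLinearMap - LinearMap.id) ⊓ Gsub F r s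

/-- `𝔓_{r,s}`: the `-1`-eigenspace of `β` restricted to `𝔊_{r,s}`. -/
noncomputable def Psub (F : Type*) [Field F] (r s : ℕ) (β : Cl F r s ≃ₐ[F] Cl F r s) :
    Submodule F (Cl F r s) :=
  LinearMap.ker (β.toLinearMap + LinearMap.id) ⊓ Gsub F r s

/-- The center `𝔷(𝔎_{r,s}) = {x ∈ 𝔎_{r,s} : [x,y] = 0 for all y ∈ 𝔎_{r,s}}`. -/
noncomputable def ZKsub (F : Type*) [Field F] (r s : ℕ) (β : Cl F r s ≃ₐ[F] Cl F r s) :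
    Submodule F (Cl F r s) where
  carrier := {x | x ∈ Ksub F r s β ∧ ∀ y ∈ Ksub F r s β, x * y = y * x}
  zero_mem' := ⟨zero_mem _, fun y _ => by simp⟩
  add_mem' := fun {a b} ha hb => ⟨add_mem ha.1 hb.1, fun y hy => by
    rw [add_mul, mul_add, ha.2 y hy, hb.2 y hy]⟩
  smul_mem' := fun c a ha => ⟨Submodule.smul_mem _ c ha.1, fun y hy => by
    rw [smul_mul_assoc, mul_smul_comm, ha.2 y hy]⟩

/-- `𝔥_{r,s}`: the span of the `e_I` with `|I| ≡ 1, 2 (mod 4)` and `I ≠ {1,…,n}`. -/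
noncomputable def Hsub (F : Type*) [Field F] (r s : ℕ) : Submodule F (Cl F r s) :=
  Submodule.span F {x | ∃ I : Finset (Fin (r + s)), I.Nonempty ∧ I ≠ Finset.univ ∧
    (I.card % 4 = 1 ∨ I.card % 4 = 2) ∧ x = eProd F r s I}

/-- The volume element `ω = e₁e₂⋯e_n`. -/
noncomputable def omegaEl (F : Type*) [Field F] (r s : ℕ) : Cl F r s :=
  eProd F r s Finset.univ


/-! ### Auxiliary lemmas -/

section Aux

theorem tri : ∀ n : ℕ, (n+1)*n/2 = n*(n-1)/2 + n
  | 0 => rfl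
  | (m+1) => by
    obtain ⟨a, ha⟩ := Nat.even_mul_succ_self (m+1)
    obtain ⟨b, hb⟩ := Nat.even_mul_succ_self m
    have h3 : a + a = b + b + 2*(m+1) := by nlinarith [ha, hb]
    simp only [Nat.add_sub_cancel]
    rw [mul_comm (m+1+1), ha, mul_comm (m+1), hb]
    omega

variable {F : Type*} [Field F] {r s : ℕ}

theorem Qf_single (i : Fin (r+s)) (c : F) :
    Qf F r s (Pi.single i c) = (if (i:ℕ) < r then -1 else 1) * (c * c) := by
  rw [Qf, QuadraticMap.weightedSumSquares_apply]
  rw [Finset.sum_eq_single i]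
  · simp
  · intro k _ hk; simp [Pi.single_apply, hk]
  · simp

theorem gen_sq (i : Fin (r+s)) :
    gen F r s i * gen F r s i = algebraMap F _ (if (i:ℕ) < r then -1 else 1) := by
  rw [gen, ι_sq_scalar, Qf_single]; ring_nf

theorem gen_anticomm {i j : Fin (r+s)} (h : i ≠ j) :
    gen F r s i * gen F r s j = -(gen F r s j * gen F r s i) := by
  apply ι_mul_ι_comm_of_isOrtho
  rw [QuadraticMap.isOrtho_def]
  simp only [Qf, QuadraticMap.weightedSumSquares_apply, Pi.add_apply, Pi.single_apply,
    smul_eq_mul]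
  rw [← Finset.sum_add_distrib]
  apply Finset.sum_congr rfl
  intro k _
  by_cases hki : k = i <;> by_cases hkj : k = j <;> simp_all

noncomputable def eL (F : Type*) [Field F] (r s : ℕ) (l : List (Fin (r+s))) : Cl F r s :=
  (l.map (gen F r s)).prod

def pCount (r s : ℕ) (l : List (Fin (r+s))) : ℕ :=
  (l.filter (fun i : Fin (r+s) => (i:ℕ) < r)).length

def qCount (r s : ℕ) (l : List (Fin (r+s))) : ℕ :=
  (l.filter (fun i : Fin (r+s) => ¬ (i:ℕ) < r)).length

@[simp] theorem pCount_nil : pCount r s [] = 0 := rfl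
@[simp] theorem qCount_nil : qCount r s [] = 0 := rfl

theorem pq_count (l : List (Fin (r+s))) : pCount r s l + qCount r s l = l.length := by
  unfold pCount qCount
  have hfun : (fun x : Fin (r+s) => !decide ((x:ℕ) < r)) = (fun i : Fin (r+s) => decide (¬ (i:ℕ) < r)) := by
    funext i; by_cases h : (i:ℕ) < r <;> simp [h]
  rw [List.length_eq_length_filter_add (l := l) (fun i : Fin (r+s) => decide ((i:ℕ) < r)), hfun]

theorem pCount_cons (a : Fin (r+s)) (l : List (Fin (r+s))) :
    pCount r s (a :: l) = (if (a:ℕ) < r then 1 else 0) + pCount r s l := by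
  unfold pCount; rw [List.filter_cons]; by_cases h : (a:ℕ) < r <;> simp [h, Nat.add_comm]

theorem qCount_cons (a : Fin (r+s)) (l : List (Fin (r+s))) :
    qCount r s (a :: l) = (if (a:ℕ) < r then 0 else 1) + qCount r s l := by
  unfold qCount; rw [List.filter_cons]; by_cases h : (a:ℕ) < r <;> simp [h, Nat.add_comm]

@[simp] theorem eL_nil : eL F r s [] = 1 := rfl

@[simp] theorem eL_cons (a : Fin (r+s)) (l : List (Fin (r+s))) :
    eL F r s (a :: l) = gen F r s a * eL F r s l := by
  simp [eL]

theorem eL_append (l l' : List (Fin (r+s))) :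
    eL F r s (l ++ l') = eL F r s l * eL F r s l' := by
  simp [eL]

theorem eL_mul_gen {a : Fin (r+s)} {l : List (Fin (r+s))} (h : a ∉ l) :
    eL F r s l * gen F r s a = (-1:F)^l.length • (gen F r s a * eL F r s l) := by
  induction l with
  | nil => simp
  | cons b t ih =>
    have hab : a ≠ b := fun e => h (e ▸ List.mem_cons_self (a := b) (l := t))
    have hat : a ∉ t := fun e => h (List.mem_cons_of_mem b e)
    rw [eL_cons, mul_assoc, ih hat, mul_smul_comm, ← mul_assoc,
      gen_anticomm (Ne.symm hab), List.length_cons, pow_succ, mul_neg_one,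
      neg_smul, neg_mul, smul_neg, mul_assoc]

theorem eL_reverse {l : List (Fin (r+s))} (h : l.Nodup) :
    eL F r s l.reverse = (-1:F)^(l.length * (l.length - 1) / 2) • eL F r s l := by
  induction l with
  | nil => simp
  | cons a t ih =>
    have hat : a ∉ t := (List.nodup_cons.mp h).1
    have ht : t.Nodup := (List.nodup_cons.mp h).2
    rw [List.reverse_cons, eL_append, ih ht]
    simp only [eL_cons, eL_nil, mul_one]
    rw [smul_mul_assoc, eL_mul_gen hat, smul_smul, ← pow_add]
    congr 2
    simp only [List.length_cons, Nat.add_sub_cancel]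
    rw [tri]

theorem eL_sq {l : List (Fin (r+s))} (h : l.Nodup) :
    eL F r s l * eL F r s l =
      algebraMap F _ ((-1:F)^(l.length * (l.length - 1) / 2) * (-1:F)^(pCount r s l)) := by
  induction l with
  | nil => simp
  | cons a t ih =>
    have hat : a ∉ t := (List.nodup_cons.mp h).1
    have ht : t.Nodup := (List.nodup_cons.mp h).2
    rw [eL_cons, mul_assoc, ← mul_assoc (eL F r s t), eL_mul_gen hat,
      smul_mul_assoc, mul_smul_comm, mul_assoc (gen F r s a) (eL F r s t),
      ← mul_assoc (gen F r s a) (gen F r s a), gen_sq, ih ht, ← map_mul,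
      Algebra.smul_def, ← map_mul]
    congr 1
    rw [pCount_cons]
    simp only [List.length_cons, Nat.add_sub_cancel, tri]
    by_cases har : (a:ℕ) < r
    · simp only [har, if_true]
      rw [pow_add, pow_add, pow_one]
      ring
    · simp only [har, if_false]
      rw [pow_add, pow_add, pow_zero]
      ring

theorem involute_eL (l : List (Fin (r+s))) :
    involute (eL F r s l) = (-1:F)^l.length • eL F r s l := by
  induction l with
  | nil => simp
  | cons a t ih =>
    rw [eL_cons, map_mul, ih, gen, involute_ι, ← gen]
    rw [List.length_cons, pow_succ, mul_neg_one, neg_smul, neg_mul, mul_smul_comm]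

theorem reverse_eL (l : List (Fin (r+s))) :
    reverse (Q := Qf F r s) (eL F r s l) = eL F r s l.reverse := by
  induction l with
  | nil => simp
  | cons a t ih =>
    rw [eL_cons, reverse.map_mul, ih, gen, reverse_ι, List.reverse_cons,
      eL_append, ← gen]
    simp

theorem eProd_eq (I : Finset (Fin (r+s))) : eProd F r s I = eL F r s (I.sort (· ≤ ·)) := rfl

@[simp] theorem eProd_empty : eProd F r s ∅ = 1 := by simp [eProd_eq]

theorem eProd_singleton (i : Fin (r+s)) : eProd F r s {i} = gen F r s i := by
  rw [eProd_eq, Finset.sort_singleton]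
  simp

theorem eProd_insert_min {j : Fin (r+s)} {J : Finset (Fin (r+s))} (h1 : ∀ b ∈ J, j ≤ b)
    (h2 : j ∉ J) : eProd F r s (insert j J) = gen F r s j * eProd F r s J := by
  rw [eProd_eq, Finset.sort_insert (· ≤ ·) h1 h2, eL_cons, ← eProd_eq]

theorem key_span (I : Finset (Fin (r+s))) (i : Fin (r+s)) :
    gen F r s i * eProd F r s I ∈
      Submodule.span F {x | ∃ J : Finset (Fin (r+s)), J ⊆ insert i I ∧ x = eProd F r s J} := by
  induction I using Finset.strongInductionOn generalizing i with
  | _ I IH =>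
  rcases I.eq_empty_or_nonempty with rfl | hne
  · rw [eProd_empty, mul_one, ← eProd_singleton]
    exact Submodule.subset_span ⟨{i}, by simp, rfl⟩
  · set j := I.min' hne with hj
    have hjI : j ∈ I := I.min'_mem hne
    have hErase : insert j (I.erase j) = I := Finset.insert_erase hjI
    have hmin : ∀ b ∈ I.erase j, j ≤ b := fun b hb =>
      I.min'_le b (Finset.mem_of_mem_erase hb)
    have hsplit : eProd F r s I = gen F r s j * eProd F r s (I.erase j) := by
      conv_lhs => rw [← hErase]
      exact eProd_insert_min hmin (Finset.notMem_erase j I)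
    rcases lt_trichotomy i j with hij | rfl | hij
    · have hiI : i ∉ I := fun h => absurd (I.min'_le i h) (by simp [← hj]; exact hij)
      have : eProd F r s (insert i I) = gen F r s i * eProd F r s I :=
        eProd_insert_min (fun b hb => le_of_lt (lt_of_lt_of_le hij (I.min'_le b hb))) hiI
      rw [← this]
      exact Submodule.subset_span ⟨insert i I, le_refl _, rfl⟩
    · rw [hsplit, ← mul_assoc, gen_sq, ← Algebra.smul_def]
      exact Submodule.smul_mem _ _ (Submodule.subset_span
        ⟨I.erase j, (I.erase_subset j).trans (Finset.subset_insert j I), rfl⟩)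
    · have hne' : i ≠ j := (ne_of_gt hij)
      rw [hsplit, ← mul_assoc, gen_anticomm hne', neg_mul, mul_assoc]
      apply Submodule.neg_mem
      have hIH := IH (I.erase j) (Finset.erase_ssubset hjI) i
      refine Submodule.span_induction ?_ ?_ ?_ ?_ hIH
      · rintro x ⟨J, hJ, rfl⟩
        have hjJ : j ∉ J := fun hmem => by
          rcases Finset.mem_insert.mp (hJ hmem) with h | h
          · exact hne' h.symm
          · exact Finset.notMem_erase j I h
        have hjle : ∀ b ∈ J, j ≤ b := by
          intro b hb
          rcases Finset.mem_insert.mp (hJ hb) with rfl | h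
          · exact le_of_lt hij
          · exact hmin b h
        rw [← eProd_insert_min hjle hjJ]
        apply Submodule.subset_span
        refine ⟨insert j J, ?_, rfl⟩
        intro b hb
        rcases Finset.mem_insert.mp hb with rfl | hbJ
        · exact Finset.mem_insert_of_mem hjI
        · rcases Finset.mem_insert.mp (hJ hbJ) with rfl | h
          · exact Finset.mem_insert_self b I
          · exact Finset.mem_insert_of_mem (Finset.mem_of_mem_erase h)
      · simp
      · intro x y _ _ hx hy
        rw [mul_add]; exact Submodule.add_mem _ hx hy
      · intro c x _ hx
        rw [mul_smul_comm]; exact Submodule.smul_mem _ _ hx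

theorem gen_mul_mem {x : Cl F r s} (i : Fin (r+s))
    (hx : x ∈ Submodule.span F (Set.range (eProd F r s))) :
    gen F r s i * x ∈ Submodule.span F (Set.range (eProd F r s)) := by
  refine Submodule.span_induction ?_ ?_ ?_ ?_ hx
  · rintro y ⟨I, rfl⟩
    refine Submodule.span_le.mpr ?_ (key_span I i)
    rintro z ⟨J, _, rfl⟩
    exact Submodule.subset_span ⟨J, rfl⟩
  · simp
  · intro a b _ _ ha hb; rw [mul_add]; exact Submodule.add_mem _ ha hb
  · intro c a _ ha; rw [mul_smul_comm]; exact Submodule.smul_mem _ _ ha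

theorem span_eProd_top : Submodule.span F (Set.range (eProd F r s)) = ⊤ := by
  set S := Submodule.span F (Set.range (eProd F r s)) with hS
  have h1 : (1 : Cl F r s) ∈ S := by
    rw [← eProd_empty]; exact Submodule.subset_span ⟨∅, rfl⟩
  have hgen : ∀ i, gen F r s i ∈ S := fun i => by
    rw [← eProd_singleton]; exact Submodule.subset_span ⟨{i}, rfl⟩
  have hmulL : ∀ (l : List (Fin (r+s))) (x : Cl F r s), x ∈ S → eL F r s l * x ∈ S := by
    intro l
    induction l with
    | nil => intro x hx; simpa using hx
    | cons a t ih =>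
      intro x hx
      rw [eL_cons, mul_assoc]
      exact gen_mul_mem a (ih x hx)
  rw [eq_top_iff]
  rintro x -
  induction x using CliffordAlgebra.induction with
  | algebraMap c =>
    rw [Algebra.algebraMap_eq_smul_one]
    exact Submodule.smul_mem _ _ h1
  | ι v =>
    have hv : v = ∑ i : Fin (r+s), v i • (Pi.single i 1 : Fin (r+s) → F) := by
      funext j
      simp [Pi.single_apply, Finset.sum_ite_eq', mul_comm]
    rw [hv, map_sum]
    apply Submodule.sum_mem
    intro i _
    rw [map_smul]
    exact Submodule.smul_mem _ _ (hgen i)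
  | mul x y hx hy =>
    refine Submodule.span_induction ?_ ?_ ?_ ?_ hx
    · rintro z ⟨I, rfl⟩
      rw [eProd_eq]
      exact hmulL _ y hy
    · simp
    · intro a b _ _ ha hb; rw [add_mul]; exact Submodule.add_mem _ ha hb
    · intro c a _ ha; rw [smul_mul_assoc]; exact Submodule.smul_mem _ _ ha
  | add x y hx hy => exact Submodule.add_mem _ hx hy

theorem conj_apply (x : Cl F r s) :
    conj F r s x = reverse (Q := Qf F r s) (involute x) := rfl

theorem conj_one : conj F r s (1 : Cl F r s) = 1 := by
  rw [conj_apply]; simp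

theorem conj_eL {l : List (Fin (r+s))} (h : l.Nodup) :
    conj F r s (eL F r s l) = (-1:F)^((l.length+1)*l.length/2) • eL F r s l := by
  rw [conj_apply, involute_eL, map_smul, reverse_eL, eL_reverse h, smul_smul,
    ← pow_add, tri]
  rw [Nat.add_comm l.length (l.length * (l.length - 1) / 2)]

theorem beta_gen (β : Cl F r s ≃ₐ[F] Cl F r s)
    (hβ : ∀ v : Fin (r + s) → F,
      β (ι (Qf F r s) v) = ι (Qf F r s) (fun i => if (i : ℕ) < r then v i else -v i))
    (i : Fin (r+s)) :
    β (gen F r s i) = (if (i:ℕ) < r then (1:F) else -1) • gen F r s i := by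
  rw [gen, hβ]
  by_cases h : (i:ℕ) < r
  · simp only [h, if_true, one_smul]
    have hfun : (fun j : Fin (r+s) => if (j:ℕ) < r then (Pi.single i 1 : Fin (r+s) → F) j
        else -((Pi.single i 1 : Fin (r+s) → F) j)) = (Pi.single i 1 : Fin (r+s) → F) := by
      funext j
      by_cases hj : (j:ℕ) < r
      · simp [hj]
      · have hji : j ≠ i := fun e => hj (e ▸ h)
        simp [hj, Pi.single_apply, hji]
    rw [hfun]
  · simp only [h, if_false]
    have hfun : (fun j : Fin (r+s) => if (j:ℕ) < r then (Pi.single i 1 : Fin (r+s) → F) j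
        else -((Pi.single i 1 : Fin (r+s) → F) j)) = (-(Pi.single i 1) : Fin (r+s) → F) := by
      funext j
      by_cases hj : (j:ℕ) < r
      · have hji : j ≠ i := fun e => h (e ▸ hj)
        simp [hj, Pi.single_apply, hji]
      · simp [hj]
    rw [hfun, map_neg, neg_one_smul]

theorem beta_eL (β : Cl F r s ≃ₐ[F] Cl F r s)
    (hβ : ∀ v : Fin (r + s) → F,
      β (ι (Qf F r s) v) = ι (Qf F r s) (fun i => if (i : ℕ) < r then v i else -v i))
    (l : List (Fin (r+s))) :
    β (eL F r s l) = (-1:F)^(qCount r s l) • eL F r s l := by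
  induction l with
  | nil => simp
  | cons a t ih =>
    rw [eL_cons, map_mul, ih, beta_gen β hβ, qCount_cons, smul_mul_assoc,
      mul_smul_comm, smul_smul]
    by_cases h : (a:ℕ) < r
    · simp [h]
    · simp only [h, if_false, pow_add, pow_one]

theorem smul_cancel {c d : F} {x : Cl F r s} (hx : x ≠ 0) (h : c • x = d • x) : c = d := by
  by_contra hcd
  have h2 : (c - d) • x = 0 := by rw [sub_smul, h, sub_self]
  rcases smul_eq_zero.mp h2 with h3 | h3
  · exact hcd (sub_eq_zero.mp h3)
  · exact hx h3

theorem eProd_signs (hF : ringChar F ≠ 2) (β : Cl F r s ≃ₐ[F] Cl F r s)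
    (hβ : ∀ v : Fin (r + s) → F,
      β (ι (Qf F r s) v) = ι (Qf F r s) (fun i => if (i : ℕ) < r then v i else -v i))
    (I : Finset (Fin (r+s))) :
    ∃ ε ε' : F, (ε = 1 ∨ ε = -1) ∧ (ε' = 1 ∨ ε' = -1) ∧
      conj F r s (eProd F r s I) = ε • eProd F r s I ∧
      β (eProd F r s I) = ε' • eProd F r s I ∧
      eProd F r s I ≠ 0 ∧
      (ε = -1 → ε' = 1 → eProd F r s I * eProd F r s I = -1) ∧
      (ε = -1 → ε' = -1 → eProd F r s I * eProd F r s I = 1) ∧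
      (1 : Cl F r s) ≠ -1 := by
  have hno : (-1:F) ≠ 1 := Ring.neg_one_ne_one_of_char_ne_two hF
  have hppow : ∀ k : ℕ, ((-1:F))^k = -1 → Odd k := by
    intro k hk
    rcases Nat.even_or_odd k with h | h
    · exact absurd (h.neg_one_pow.symm.trans hk).symm hno
    · exact h
  have hepow : ∀ k : ℕ, ((-1:F))^k = 1 → Even k := by
    intro k hk
    rcases Nat.even_or_odd k with h | h
    · exact h
    · exact absurd (h.neg_one_pow.symm.trans hk) hno
  letI : Invertible (2:F) := invertibleOfNonzero (Ring.two_ne_zero hF)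
  haveI : Nontrivial (Cl F r s) := inferInstance
  set l := I.sort (· ≤ ·) with hl
  have hnd : l.Nodup := I.sort_nodup _
  set n := l.length with hn
  set m := n*(n-1)/2 with hm
  set p := pCount r s l with hp
  set q := qCount r s l with hq
  have hpq : p + q = n := pq_count l
  have htri : (n+1)*n/2 = m + n := tri n
  have hsq : eProd F r s I * eProd F r s I = algebraMap F _ ((-1:F)^(m+p)) := by
    rw [eProd_eq, eL_sq hnd, pow_add]
  have hconj : conj F r s (eProd F r s I) = (-1:F)^(m+n) • eProd F r s I := by
    rw [eProd_eq, conj_eL hnd, ← hl, ← hn, htri]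
  have hbeta : β (eProd F r s I) = (-1:F)^q • eProd F r s I := by
    rw [eProd_eq, beta_eL β hβ]
  have hnz : eProd F r s I ≠ 0 := by
    intro h0
    have h1 : algebraMap F (Cl F r s) ((-1:F)^(m+p)) = algebraMap F (Cl F r s) 0 := by
      rw [map_zero, ← hsq, h0, mul_zero]
    have h2 : ((-1:F)^(m+p)) = 0 := (algebraMap F (Cl F r s)).injective h1
    exact pow_ne_zero _ (neg_ne_zero.mpr one_ne_zero) h2
  refine ⟨(-1)^(m+n), (-1)^q, ?_, ?_, hconj, hbeta, hnz, ?_, ?_, ?_⟩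
  · rcases Nat.even_or_odd (m+n) with h | h
    · exact Or.inl h.neg_one_pow
    · exact Or.inr h.neg_one_pow
  · rcases Nat.even_or_odd q with h | h
    · exact Or.inl h.neg_one_pow
    · exact Or.inr h.neg_one_pow
  · intro hε hε'
    have hodd : Odd (m+n) := hppow _ hε
    have heq : Even q := hepow _ hε'
    have hodd2 : Odd (m+p) := by
      rw [Nat.odd_iff] at hodd ⊢; rw [Nat.even_iff] at heq; omega
    rw [hsq, hodd2.neg_one_pow, map_neg, map_one]
  · intro hε hε'
    have hodd : Odd (m+n) := hppow _ hε
    have hoq : Odd q := hppow _ hε'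
    have hev2 : Even (m+p) := by
      rw [Nat.odd_iff] at hodd hoq; rw [Nat.even_iff]; omega
    rw [hsq, hev2.neg_one_pow, map_one]
  · intro hone
    have h1 : algebraMap F (Cl F r s) 1 = algebraMap F (Cl F r s) (-1) := by
      rw [map_one, map_neg, map_one]; exact hone
    exact hno ((algebraMap F (Cl F r s)).injective h1).symm

end Aux

/-- 𝔎 is the span of the e_I ∈ 𝔊 with e_I² = -1, and 𝔓 is the span of the
e_I ∈ 𝔊 with e_I² = +1. -/
theorem statement1 (F : Type*) [Field F] (hF : ringChar F ≠ 2) (r s : ℕ) (hn : 0 < r + s)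
    (β : Cl F r s ≃ₐ[F] Cl F r s)
    (hβ : ∀ v : Fin (r + s) → F,
      β (ι (Qf F r s) v) = ι (Qf F r s) (fun i => if (i : ℕ) < r then v i else -v i)) :
    Ksub F r s β = Submodule.span F {x | ∃ I : Finset (Fin (r + s)), I.Nonempty ∧
        x = eProd F r s I ∧ x ∈ Gsub F r s ∧ x * x = -1} ∧
    Psub F r s β = Submodule.span F {x | ∃ I : Finset (Fin (r + s)), I.Nonempty ∧
        x = eProd F r s I ∧ x ∈ Gsub F r s ∧ x * x = 1} := by
  have hno : (-1:F) ≠ 1 := Ring.neg_one_ne_one_of_char_ne_two hF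
  have h2 : (2:F) ≠ 0 := Ring.two_ne_zero hF
  have h4 : (4:F) ≠ 0 := by
    have := mul_ne_zero h2 h2
    norm_num at this ⊢
    exact this
  constructor
  · -- Ksub
    apply le_antisymm
    · intro x hx
      obtain ⟨hx1, hx2⟩ := Submodule.mem_inf.mp hx
      have hβx : β x = x := by
        rw [LinearMap.mem_ker, LinearMap.sub_apply, AlgEquiv.toLinearMap_apply,
          LinearMap.id_apply, sub_eq_zero] at hx1
        exact hx1
      have hcx : conj F r s x = -x := (mem_Gsub x).mp hx2
      set T := {x : Cl F r s | ∃ I : Finset (Fin (r + s)), I.Nonempty ∧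
        x = eProd F r s I ∧ x ∈ Gsub F r s ∧ x * x = -1} with hT
      set f : Cl F r s →ₗ[F] Cl F r s :=
        (LinearMap.id + β.toLinearMap) ∘ₗ (LinearMap.id - conj F r s) with hf
      have hfapp : ∀ z : Cl F r s, f z = (z - conj F r s z) + β (z - conj F r s z) := by
        intro z
        simp [hf, LinearMap.sub_apply, LinearMap.add_apply]
      have hfI : ∀ I : Finset (Fin (r+s)), f (eProd F r s I) ∈ Submodule.span F T := by
        intro I
        rcases I.eq_empty_or_nonempty with rfl | hne
        · rw [eProd_empty, hfapp, conj_one, sub_self, map_zero, add_zero]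
          exact zero_mem _
        · obtain ⟨ε, ε', hε, hε', hc, hb, hnz, himp1, _, hone⟩ := eProd_signs hF β hβ I
          have hfe : f (eProd F r s I) = ((1-ε)*(1+ε')) • eProd F r s I := by
            rw [hfapp, hc]
            have hsub : eProd F r s I - ε • eProd F r s I = (1-ε) • eProd F r s I := by
              rw [sub_smul, one_smul]
            rw [hsub, map_smul, hb, smul_smul]
            rw [← one_smul F (eProd F r s I)]
            rw [smul_smul, smul_smul, ← add_smul, smul_smul]
            congr 1
            ring
          rcases hε with rfl | rfl
          · rw [hfe]
            norm_num
          · rcases hε' with rfl | rfl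
            · have hmem : eProd F r s I ∈ T := by
                refine ⟨I, hne, rfl, (mem_Gsub _).mpr ?_, himp1 rfl rfl⟩
                rw [hc, neg_one_smul]
              rw [hfe]
              exact Submodule.smul_mem _ _ (Submodule.subset_span hmem)
            · rw [hfe]
              norm_num
      have hfx_mem : f x ∈ Submodule.span F T := by
        have hxtop : x ∈ Submodule.span F (Set.range (eProd F r s)) := by
          rw [span_eProd_top]; trivial
        refine Submodule.span_induction (p := fun z _ => f z ∈ Submodule.span F T)
          ?_ ?_ ?_ ?_ hxtop
        · rintro y ⟨I, rfl⟩; exact hfI I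
        · show f 0 ∈ Submodule.span F T
          rw [map_zero]; exact zero_mem _
        · intro a b _ _ ha hb
          show f (a + b) ∈ Submodule.span F T
          rw [map_add]; exact add_mem ha hb
        · intro c a _ ha
          show f (c • a) ∈ Submodule.span F T
          rw [map_smul]; exact Submodule.smul_mem _ _ ha
      have hfx : f x = (4:F) • x := by
        rw [hfapp, hcx, sub_neg_eq_add, ← two_smul F x, map_smul, hβx, ← add_smul]
        norm_num
      have hx4 : x = (4:F)⁻¹ • f x := by
        rw [hfx, smul_smul, inv_mul_cancel₀ h4, one_smul]
      rw [hx4]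
      exact Submodule.smul_mem _ _ hfx_mem
    · rw [Submodule.span_le]
      rintro x ⟨I, hne, rfl, hG, hsq⟩
      obtain ⟨ε, ε', hε, hε', hc, hb, hnz, _, himp2, hone⟩ := eProd_signs hF β hβ I
      have hceq : ε • eProd F r s I = (-1:F) • eProd F r s I := by
        rw [← hc, (mem_Gsub _).mp hG, neg_one_smul]
      have hε1 : ε = -1 := smul_cancel hnz hceq
      have hε'1 : ε' = 1 := by
        rcases hε' with h | h
        · exact h
        · exact absurd ((himp2 hε1 h).symm.trans hsq) hone
      refine Submodule.mem_inf.mpr ⟨?_, hG⟩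
      rw [LinearMap.mem_ker, LinearMap.sub_apply, AlgEquiv.toLinearMap_apply,
        LinearMap.id_apply, sub_eq_zero, hb, hε'1, one_smul]
  · -- Psub
    apply le_antisymm
    · intro x hx
      obtain ⟨hx1, hx2⟩ := Submodule.mem_inf.mp hx
      have hβx : β x = -x := by
        rw [LinearMap.mem_ker, LinearMap.add_apply, AlgEquiv.toLinearMap_apply,
          LinearMap.id_apply, add_eq_zero_iff_eq_neg] at hx1
        exact hx1
      have hcx : conj F r s x = -x := (mem_Gsub x).mp hx2
      set T := {x : Cl F r s | ∃ I : Finset (Fin (r + s)), I.Nonempty ∧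
        x = eProd F r s I ∧ x ∈ Gsub F r s ∧ x * x = 1} with hT
      set f : Cl F r s →ₗ[F] Cl F r s :=
        (LinearMap.id - β.toLinearMap) ∘ₗ (LinearMap.id - conj F r s) with hf
      have hfapp : ∀ z : Cl F r s, f z = (z - conj F r s z) - β (z - conj F r s z) := by
        intro z
        simp [hf, LinearMap.sub_apply]
      have hfI : ∀ I : Finset (Fin (r+s)), f (eProd F r s I) ∈ Submodule.span F T := by
        intro I
        rcases I.eq_empty_or_nonempty with rfl | hne
        · rw [eProd_empty, hfapp, conj_one, sub_self, map_zero, sub_zero]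
          exact zero_mem _
        · obtain ⟨ε, ε', hε, hε', hc, hb, hnz, _, himp2, hone⟩ := eProd_signs hF β hβ I
          have hfe : f (eProd F r s I) = ((1-ε)*(1-ε')) • eProd F r s I := by
            rw [hfapp, hc]
            have hsub : eProd F r s I - ε • eProd F r s I = (1-ε) • eProd F r s I := by
              rw [sub_smul, one_smul]
            rw [hsub, map_smul, hb, smul_smul]
            rw [← one_smul F (eProd F r s I)]
            rw [smul_smul, smul_smul, ← sub_smul, smul_smul]
            congr 1
            ring
          rcases hε with rfl | rfl
          · rw [hfe]
            norm_num
          · rcases hε' with rfl | rfl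
            · rw [hfe]
              norm_num
            · have hmem : eProd F r s I ∈ T := by
                refine ⟨I, hne, rfl, (mem_Gsub _).mpr ?_, himp2 rfl rfl⟩
                rw [hc, neg_one_smul]
              rw [hfe]
              exact Submodule.smul_mem _ _ (Submodule.subset_span hmem)
      have hfx_mem : f x ∈ Submodule.span F T := by
        have hxtop : x ∈ Submodule.span F (Set.range (eProd F r s)) := by
          rw [span_eProd_top]; trivial
        refine Submodule.span_induction (p := fun z _ => f z ∈ Submodule.span F T)
          ?_ ?_ ?_ ?_ hxtop
        · rintro y ⟨I, rfl⟩; exact hfI I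
        · show f 0 ∈ Submodule.span F T
          rw [map_zero]; exact zero_mem _
        · intro a b _ _ ha hb
          show f (a + b) ∈ Submodule.span F T
          rw [map_add]; exact add_mem ha hb
        · intro c a _ ha
          show f (c • a) ∈ Submodule.span F T
          rw [map_smul]; exact Submodule.smul_mem _ _ ha
      have hfx : f x = (4:F) • x := by
        rw [hfapp, hcx, sub_neg_eq_add, ← two_smul F x, map_smul, hβx, smul_neg,
          sub_neg_eq_add, ← add_smul]
        norm_num
      have hx4 : x = (4:F)⁻¹ • f x := by
        rw [hfx, smul_smul, inv_mul_cancel₀ h4, one_smul]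
      rw [hx4]
      exact Submodule.smul_mem _ _ hfx_mem
    · rw [Submodule.span_le]
      rintro x ⟨I, hne, rfl, hG, hsq⟩
      obtain ⟨ε, ε', hε, hε', hc, hb, hnz, himp1, _, hone⟩ := eProd_signs hF β hβ I
      have hceq : ε • eProd F r s I = (-1:F) • eProd F r s I := by
        rw [← hc, (mem_Gsub _).mp hG, neg_one_smul]
      have hε1 : ε = -1 := smul_cancel hnz hceq
      have hε'1 : ε' = -1 := by
        rcases hε' with h | h
        · exact absurd ((himp1 hε1 h).symm.trans hsq).symm hone
        · exact h
      refine Submodule.mem_inf.mpr ⟨?_, hG⟩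
      rw [LinearMap.mem_ker, LinearMap.add_apply, AlgEquiv.toLinearMap_apply,
        LinearMap.id_apply, add_eq_zero_iff_eq_neg, hb, hε'1, neg_one_smul]


end CliffPaper
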